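/- Let D = 1 and 1 ≤ A < 2, and let N be the NAF representation of a positive integer n. Then δ(N, i) ≤ A for all i ≥ 0, and moreover δ(N, i) ≤ A − 1 whenever n_i = 0. -/
import Mathlib


noncomputable def T (D A : ℝ) (d : ℕ → ℤ) : ℕ → ℝ
  | 0 => if d 0 = 0 then 0 else (((d 0).natAbs : ℝ) - 1) * A
  | i + 1 =>
      if d (i + 1) = 0 then T D A d i
      else if ∀ j < i + 1, d j = 0 then
        ((i : ℝ) + 1) * D + (((d (i + 1)).natAbs : ℝ) - 1) * A
      else max (T D A d i) (((i : ℝ) + 1) * D) + ((d (i + 1)).natAbs : ℝ) * A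

noncomputable def delta (A : ℝ) (d : ℕ → ℤ) : ℕ → ℝ
  | 0 => 0
  | i + 1 =>
      if d (i + 1) = 0 then delta A d i - 1
      else if ∀ j < i + 1, d j = 0 then 0
      else max (delta A d i + (A - 1)) A

def val (d : ℕ → ℤ) (lam : ℕ) : ℤ := ∑ i ∈ Finset.range (lam + 1), d i * 2 ^ i

/-- For D = 1 and 1 ≤ A < 2, the NAF representation of a positive integer n
satisfies δ(N,i) ≤ A for all i, and δ(N,i) ≤ A − 1 whenever n_i = 0. -/
theorem stmt13 (A : ℝ) (hA1 : 1 ≤ A) (hA2 : A < 2) (n lam : ℕ) (hn : 0 < n)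
    (d : ℕ → ℤ)
    (hd : ∀ i, d i = -1 ∨ d i = 0 ∨ d i = 1)
    (hnaf : ∀ i, d i * d (i + 1) = 0)
    (hhigh : ∀ i, lam < i → d i = 0)
    (hval : val d lam = (n : ℤ)) :
    ∀ i : ℕ, delta A d i ≤ A ∧ (d i = 0 → delta A d i ≤ A - 1) := by
  intro i
  induction i with
  | zero =>
    constructor
    · simpa [delta] using by linarith
    · intro _; simp [delta]; linarith
  | succ i ih =>
    by_cases h0 : d (i + 1) = 0
    · have := ih.1
      constructor
      · simp only [delta, h0, if_true]; linarith
      · intro _; simp only [delta, h0, if_true]; linarith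
    · have hdi : d i = 0 := by
        have := hnaf i
        rcases mul_eq_zero.mp this with h | h
        · exact h
        · exact absurd h h0
      by_cases hall : ∀ j < i + 1, d j = 0
      · constructor
        · simp only [delta, h0, if_false]; rw [if_pos hall]; linarith
        · intro h; exact absurd h h0
      · constructor
        · simp only [delta, h0, if_false]; rw [if_neg hall]
          have h1 : delta A d i ≤ A - 1 := ih.2 hdi
          exact max_le (by linarith) (le_refl A)
        · intro h; exact absurd h h0
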